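/- Let k be an algebraically closed field of characteristic 0, let f = (f_1,...,f_m) ∈ k[t_1,...,t_n]^m induce a surjective map k^n → k^m, and let h : k^m → k be any function such that h ∘ f (i.e., a ↦ h(f_1(a),...,f_m(a))) is a polynomial function on k^n. Then h is a polynomial function, i.e., there exists p ∈ k[x_1,...,x_m] with h(b) = p(b) for all b ∈ k^m. -/

import Mathlib

open MvPolynomial

/-- `p` vanishes at every point of `A`. -/
def VanishesOn {k : Type*} [CommSemiring k] {m : ℕ} (A : Set (Fin m → k))
    (p : MvPolynomial (Fin m) k) : Prop :=
  ∀ a ∈ A, eval a p = 0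

/-- The Zariski closure of `A ⊆ k^m` has dimension at most `d` (with `dim ∅ = -1`):
for every index set `S` with more than `d` elements, the vanishing ideal of `A`
contains a nonzero polynomial supported on the variables in `S`. -/
def ZClosureDimLE {k : Type*} [CommSemiring k] {m : ℕ} (A : Set (Fin m → k)) (d : ℤ) : Prop :=
  ∀ S : Finset (Fin m), d < (S.card : ℤ) →
    ∃ p : MvPolynomial (Fin m) k, p ≠ 0 ∧
      p ∈ MvPolynomial.supported k (↑S : Set (Fin m)) ∧ VanishesOn A p

/-- The range of the polynomial map `k^n → k^m` induced by `f`. -/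
def polyRange {k : Type*} [CommSemiring k] {m n : ℕ}
    (f : Fin m → MvPolynomial (Fin n) k) : Set (Fin m → k) :=
  Set.range fun a : Fin n → k => fun i => eval a (f i)

/-- `f` is almost surjective on `k`: the Zariski closure of the complement of the range
of the induced map `k^n → k^m` has dimension at most `m - 2`. -/
def AlmostSurj {k : Type*} [CommSemiring k] {m n : ℕ}
    (f : Fin m → MvPolynomial (Fin n) k) : Prop :=
  ZClosureDimLE (polyRange f)ᶜ ((m : ℤ) - 2)

/-- `g` is determined by `f`. -/
def Determined {k : Type*} [CommSemiring k] {m n : ℕ}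
    (f : Fin m → MvPolynomial (Fin n) k) (g : MvPolynomial (Fin n) k) : Prop :=
  ∀ a b : Fin n → k, (∀ i, eval a (f i) = eval b (f i)) → eval a g = eval b g

noncomputable section PiPoly

variable {F L : Type*} [Field F] [Field L] [Algebra F L] {σ : Type*}

/-- Apply an `F`-linear projection `π : L → F` to the coefficients of a polynomial. -/
noncomputable def piPoly (π : L →ₗ[F] F) (p : MvPolynomial σ L) : MvPolynomial σ F :=
  ∑ α ∈ p.support, monomial α (π (coeff α p))

lemma coeff_piPoly (π : L →ₗ[F] F) (p : MvPolynomial σ L) (β : σ →₀ ℕ) :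
    coeff β (piPoly π p) = π (coeff β p) := by
  classical
  rw [piPoly, coeff_sum]
  simp only [coeff_monomial]
  rw [show (∑ x ∈ p.support, if x = β then π (coeff x p) else 0)
      = ∑ x ∈ p.support, if x = β then π (coeff β p) else 0 from
    Finset.sum_congr rfl fun x _ => by split_ifs with hx <;> simp [hx],
    Finset.sum_ite_eq' p.support β (fun _ => π (coeff β p))]
  split_ifs with hb
  · rfl
  · rw [notMem_support_iff.1 hb, map_zero]

lemma piPoly_map (π : L →ₗ[F] F) (hπ : ∀ x : F, π (algebraMap F L x) = x)
    (u : MvPolynomial σ F) : piPoly π (map (algebraMap F L) u) = u := by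
  ext β
  rw [coeff_piPoly, coeff_map, hπ]

lemma piPoly_map_mul (π : L →ₗ[F] F) (u : MvPolynomial σ F) (v : MvPolynomial σ L) :
    piPoly π (map (algebraMap F L) u * v) = u * piPoly π v := by
  classical
  ext β
  rw [coeff_piPoly, coeff_mul, coeff_mul, map_sum]
  refine Finset.sum_congr rfl fun x _ => ?_
  rw [coeff_map, coeff_piPoly, ← Algebra.smul_def (coeff x.1 u) (coeff x.2 v), map_smul,
    Algebra.smul_def]
  norm_num

lemma piPoly_sum (π : L →ₗ[F] F) {ι : Type*} (s : Finset ι) (w : ι → MvPolynomial σ L) :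
    piPoly π (∑ i ∈ s, w i) = ∑ i ∈ s, piPoly π (w i) := by
  ext β
  rw [coeff_piPoly, coeff_sum, map_sum, coeff_sum]
  exact Finset.sum_congr rfl fun i _ => (coeff_piPoly π (w i) β).symm

end PiPoly
open MvPolynomial

/-- If `γ ∉ B` (inside `LL`, char zero), there is a `B`-embedding of `B⟮γ⟯` into an
algebraically closed field `Ω` moving `γ` (relative to a fixed embedding `j : LL → Ω`). -/
lemma exists_moving_hom {B LL Ω : Type*} [Field B] [Field LL] [Field Ω]
    [Algebra B LL] [Algebra B Ω] [IsAlgClosed Ω] [CharZero B]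
    (j : LL →ₐ[B] Ω) (γ : LL) (hγ : γ ∉ (algebraMap B LL).range) :
    ∃ σ : ↥(IntermediateField.adjoin B {γ}) →ₐ[B] Ω,
      σ (IntermediateField.AdjoinSimple.gen B γ) ≠ j γ := by
  classical
  by_cases halg : IsAlgebraic B γ
  · -- algebraic case
    have hInt : IsIntegral B γ := halg.isIntegral
    set p := minpoly B γ with hp
    have hirr : Irreducible p := minpoly.irreducible hInt
    have hsep : p.Separable := hirr.separable
    have hdeg : 2 ≤ p.natDegree := (minpoly.two_le_natDegree_iff hInt).2 hγ
    have hsplits : (p.map (algebraMap B Ω)).Splits := IsAlgClosed.splits _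
    have hcard : Multiset.card (p.map (algebraMap B Ω)).roots = p.natDegree :=
      by rw [← hsplits.natDegree_eq_card_roots, Polynomial.natDegree_map]
    have hnodup : (p.map (algebraMap B Ω)).roots.Nodup :=
      Polynomial.nodup_roots (hsep.map)
    have hjmem : j γ ∈ (p.map (algebraMap B Ω)).roots := by
      rw [Polynomial.mem_roots (Polynomial.map_ne_zero (minpoly.ne_zero hInt))]
      rw [Polynomial.IsRoot, Polynomial.eval_map, ← Polynomial.aeval_def,
        Polynomial.aeval_algHom_apply, minpoly.aeval, map_zero]
    obtain ⟨y, hy, hyne⟩ : ∃ y ∈ (p.map (algebraMap B Ω)).roots, y ≠ j γ := by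
      by_contra hcon
      push_neg at hcon
      have h2 : Multiset.count (j γ) (p.map (algebraMap B Ω)).roots
          = Multiset.card (p.map (algebraMap B Ω)).roots :=
        Multiset.count_eq_card.2 fun x hx => ((hcon x hx)).symm
      have h1 : Multiset.count (j γ) (p.map (algebraMap B Ω)).roots ≤ 1 :=
        Multiset.nodup_iff_count_le_one.1 hnodup _
      omega
    have hy0 : Polynomial.aeval y p = 0 := by
      have h3 := (Polynomial.mem_roots'.1 hy).2
      rwa [Polynomial.IsRoot, Polynomial.eval_map, ← Polynomial.aeval_def] at h3
    refine ⟨(AdjoinRoot.liftAlgHom p (Algebra.ofId B Ω) y (by rw [Algebra.toRingHom_ofId, ← Polynomial.aeval_def]; exact hy0)).comp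
      (IntermediateField.adjoinRootEquivAdjoin B hInt).symm.toAlgHom, ?_⟩
    rw [AlgHom.comp_apply, AlgEquiv.toAlgHom_apply,
      IntermediateField.adjoinRootEquivAdjoin_symm_apply_gen, AdjoinRoot.liftAlgHom_root]
    exact hyne
  · -- transcendental case
    have htr : Transcendental B γ := halg
    have hx : AlgebraicIndependent B (fun _ : Unit => γ) :=
      algebraicIndependent_unique_type_iff.2 htr
    have htrj : Transcendental B (j γ) := by
      intro hAlg
      obtain ⟨q, hq0, hq⟩ := hAlg
      refine htr ⟨q, hq0, j.injective ?_⟩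
      show j _ = j 0
      rw [map_zero, ← Polynomial.aeval_algHom_apply]
      exact hq
    have htrj1 : Transcendental B (j γ + 1) := by
      intro hAlg
      have h5 : IsIntegral B (j γ + 1 - 1) := (hAlg.isIntegral).sub isIntegral_one
      rw [add_sub_cancel_right] at h5
      exact htrj h5.isAlgebraic
    have hyAI : AlgebraicIndependent B (fun _ : Unit => j γ + 1) :=
      algebraicIndependent_unique_type_iff.2 htrj1
    have hginj : Function.Injective
        (aeval (R := B) (fun _ : Unit => j γ + 1) : MvPolynomial Unit B →ₐ[B] Ω) :=
      algebraicIndependent_iff_injective_aeval.1 hyAI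
    let σ0 : FractionRing (MvPolynomial Unit B) →ₐ[B] Ω := IsFractionRing.liftAlgHom hginj
    let equiv := hx.aevalEquivField
    have hre : IntermediateField.adjoin B {γ}
        = IntermediateField.adjoin B (Set.range fun _ : Unit => γ) := by
      rw [Set.range_const]
    refine ⟨(σ0.comp equiv.symm.toAlgHom).comp (IntermediateField.equivOfEq hre).toAlgHom, ?_⟩
    have hgen : (IntermediateField.equivOfEq hre) (IntermediateField.AdjoinSimple.gen B γ)
        = equiv (algebraMap (MvPolynomial Unit B) (FractionRing (MvPolynomial Unit B)) (X ())) := by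
      apply Subtype.ext
      have h6 := hx.aevalEquivField_algebraMap_apply_coe (X ())
      rw [IntermediateField.equivOfEq_apply]
      show γ = _
      rw [show (equiv ((algebraMap (MvPolynomial Unit B)
          (FractionRing (MvPolynomial Unit B))) (X ())) : LL) = aeval (fun _ : Unit => γ) (X ())
        from h6, aeval_X]
    have hc1 : ((σ0.comp equiv.symm.toAlgHom).comp (IntermediateField.equivOfEq hre).toAlgHom)
        (IntermediateField.AdjoinSimple.gen B γ)
        = σ0 (equiv.symm ((IntermediateField.equivOfEq hre)
            (IntermediateField.AdjoinSimple.gen B γ))) := rfl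
    rw [hc1, hgen, AlgEquiv.symm_apply_apply]
    have h7 : σ0 ((algebraMap (MvPolynomial Unit B) (FractionRing (MvPolynomial Unit B))) (X ()))
        = j γ + 1 := by
      show (⇑σ0) _ = _
      rw [IsFractionRing.coe_liftAlgHom, IsFractionRing.lift_algebraMap]
      simp
    rw [h7]
    intro hcon
    rw [add_eq_left] at hcon
    exact one_ne_zero hcon
open MvPolynomial

lemma step6 {k : Type*} [Field k] [IsAlgClosed k] {m n : ℕ}
    (f : Fin m → MvPolynomial (Fin n) k)
    (hsurj : Function.Surjective fun a : Fin n → k => fun i => eval a (f i))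
    (h : (Fin m → k) → k) (g : MvPolynomial (Fin n) k)
    (hcomp : ∀ a : Fin n → k, h (fun i => eval a (f i)) = eval a g) :
    ∀ Q : MvPolynomial (Fin m) k, aeval f Q ≠ 0 →
      ∀ P : MvPolynomial (Fin m) k, g * aeval f Q = aeval f P →
      ∃ p : MvPolynomial (Fin m) k, ∀ b : Fin m → k, h b = eval b p := by
  -- evaluation lemma : eval a (aeval f R) = eval (f-image of a) R
  have heval : ∀ (a : Fin n → k) (R : MvPolynomial (Fin m) k),
      eval a (aeval f R) = eval (fun i => eval a (f i)) R := by
    intro a R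
    have : (eval a).comp ((aeval f : MvPolynomial (Fin m) k →ₐ[k] MvPolynomial (Fin n) k) :
        MvPolynomial (Fin m) k →+* MvPolynomial (Fin n) k)
        = eval (fun i => eval a (f i)) := by
      apply ringHom_ext
      · intro r; simp
      · intro i; simp
    exact congrFun (congrArg (fun φ => φ.toFun) this) R
  -- pointwise identity derivation
  have hpt : ∀ Q P : MvPolynomial (Fin m) k, g * aeval f Q = aeval f P →
      ∀ b : Fin m → k, h b * eval b Q = eval b P := by
    intro Q P hid b
    obtain ⟨a, ha⟩ := hsurj b
    have hb : (fun i => eval a (f i)) = b := ha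
    have := congrArg (eval a) hid
    rw [map_mul, heval, heval, hb] at this
    rw [← this, ← hb, hcomp a]
  intro Q
  refine wellFounded_dvdNotUnit.induction (C := fun Q => aeval f Q ≠ 0 →
    ∀ P : MvPolynomial (Fin m) k, g * aeval f Q = aeval f P →
    ∃ p : MvPolynomial (Fin m) k, ∀ b : Fin m → k, h b = eval b p) Q ?_
  intro Q ih hQ0 P hid
  by_cases hu : IsUnit Q
  · obtain ⟨u, rfl⟩ := hu
    refine ⟨P * ↑u⁻¹, fun b => ?_⟩
    have h1 : eval b (↑u * ↑u⁻¹ : MvPolynomial (Fin m) k) = 1 := by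
      rw [Units.mul_inv]; simp
    rw [map_mul] at h1
    calc h b = h b * (eval b ↑u * eval b ↑u⁻¹) := by rw [h1, mul_one]
    _ = (h b * eval b ↑u) * eval b ↑u⁻¹ := by ring
    _ = eval b P * eval b ↑u⁻¹ := by rw [hpt _ _ hid b]
    _ = eval b (P * ↑u⁻¹) := by rw [map_mul]
  · have hQne : Q ≠ 0 := fun hc => hQ0 (by rw [hc, map_zero])
    obtain ⟨q, hqirr, Q', rfl⟩ : ∃ q, Irreducible q ∧ ∃ Q', Q = q * Q' := by
      obtain ⟨q, hq, c, hc⟩ := WfDvdMonoid.exists_irreducible_factor hu hQne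
      exact ⟨q, hq, c, hc⟩
    -- q divides P via the Nullstellensatz
    have hvanish : ∀ b : Fin m → k, eval b q = 0 → eval b P = 0 := by
      intro b hb
      have := hpt _ _ hid b
      rw [map_mul, hb, zero_mul, mul_zero] at this
      exact this.symm
    have hqP : q ∣ P := by
      have hmem : P ∈ vanishingIdeal k (zeroLocus k (Ideal.span {q})) := by
        rw [mem_vanishingIdeal_iff]
        intro x hx
        have hxq := hx q (Ideal.subset_span rfl)
        change eval _ _ = 0 at hxq ⊢
        exact hvanish x hxq
      rw [vanishingIdeal_zeroLocus_eq_radical,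
        (Ideal.span_singleton_prime hqirr.ne_zero).2
          (UniqueFactorizationMonoid.irreducible_iff_prime.1 hqirr) |>.radical,
        Ideal.mem_span_singleton] at hmem
      exact hmem
    obtain ⟨P', rfl⟩ := hqP
    have hq0 : aeval f q ≠ 0 := fun hc => hQ0 (by rw [map_mul, hc, zero_mul])
    have hQ'0 : aeval f Q' ≠ 0 := fun hc => hQ0 (by rw [map_mul, hc, mul_zero])
    have hid' : g * aeval f Q' = aeval f P' := by
      apply mul_left_cancel₀ hq0
      rw [map_mul, map_mul] at hid
      calc aeval f q * (g * aeval f Q') = g * (aeval f q * aeval f Q') := by ring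
      _ = aeval f q * aeval f P' := hid
    exact ih Q' ⟨hQ'0 ∘ fun hc => by rw [hc, map_zero], q, hqirr.not_isUnit, mul_comm q Q'⟩ hQ'0 P' hid'

set_option maxHeartbeats 2000000 in
set_option synthInstance.maxHeartbeats 400000 in
theorem stmt17 {k : Type*} [Field k] [IsAlgClosed k] [CharZero k] {m n : ℕ}
    (f : Fin m → MvPolynomial (Fin n) k)
    (hsurj : Function.Surjective fun a : Fin n → k => fun i => eval a (f i))
    (h : (Fin m → k) → k) (g : MvPolynomial (Fin n) k)
    (hcomp : ∀ a : Fin n → k, h (fun i => eval a (f i)) = eval a g) :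
    ∃ p : MvPolynomial (Fin m) k, ∀ b : Fin m → k, h b = eval b p := by
  classical
  have hdet : ∀ a b : Fin n → k, (∀ i, eval a (f i) = eval b (f i)) → eval a g = eval b g := by
    intro a b hab
    rw [← hcomp a, ← hcomp b]
    congr 1
    exact funext hab
  let R1 := MvPolynomial (Fin n) k
  let L := FractionRing R1
  let Ω := AlgebraicClosure L
  let tL : Fin n → L := fun i => algebraMap R1 L (X i)
  let φk : R1 →ₐ[k] L := IsScalarTower.toAlgHom k R1 L
  let β : Fin m → L := fun j2 => φk (f j2)
  let γ : L := φk g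
  -- Step 1 : Nullstellensatz over k
  have hrad : ∃ N : ℕ, (rename Sum.inl g - rename Sum.inr g) ^ N ∈
      Ideal.span (Set.range fun j2 : Fin m =>
        rename (Sum.inl : Fin n → Fin n ⊕ Fin n) (f j2) - rename Sum.inr (f j2)) := by
    have hmem : (rename (Sum.inl : Fin n → Fin n ⊕ Fin n) g - rename Sum.inr g) ∈
        vanishingIdeal k (zeroLocus k (Ideal.span (Set.range fun j2 : Fin m =>
          rename (Sum.inl : Fin n → Fin n ⊕ Fin n) (f j2) - rename Sum.inr (f j2)))) := by
      rw [mem_vanishingIdeal_iff]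
      intro c hc
      have heq : ∀ j2, eval (c ∘ Sum.inl) (f j2) = eval (c ∘ Sum.inr) (f j2) := by
        intro j2
        have h1 := hc _ (Ideal.subset_span (Set.mem_range_self j2))
        change eval _ _ = 0 at h1
        rwa [map_sub, sub_eq_zero, eval_rename, eval_rename] at h1
      have h2 := hdet (c ∘ Sum.inl) (c ∘ Sum.inr) heq
      change eval _ _ = 0
      rw [map_sub, eval_rename, eval_rename, h2, sub_self]
    rw [vanishingIdeal_zeroLocus_eq_radical] at hmem
    exact hmem
  obtain ⟨N, hN⟩ := hrad
  -- Step 2 : substitute the generic point in the second block of variables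
  let A1 := MvPolynomial (Fin n) L
  let v : (Fin n ⊕ Fin n) → A1 := Sum.elim X fun i => C (tL i)
  let Θ : MvPolynomial (Fin n ⊕ Fin n) k →ₐ[k] A1 := aeval v
  have haevalX : (aeval (X : Fin n → A1) : R1 →ₐ[k] A1) = mapAlgHom (Algebra.ofId k L) := by
    apply algHom_ext
    intro i
    rw [aeval_X]; exact (map_X _ _).symm
  have hmapeq : ∀ p : R1, map (algebraMap k L) p = aeval (X : Fin n → A1) p := by
    intro p
    rw [haevalX]
    rfl
  have haevaltL : (aeval tL : R1 →ₐ[k] L) = φk := by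
    apply algHom_ext
    intro i
    simp [φk, tL]; rfl
  have hΘl : ∀ p : R1, Θ (rename Sum.inl p) = map (algebraMap k L) p := by
    intro p
    rw [show Θ (rename Sum.inl p) = aeval (v ∘ Sum.inl) p from aeval_rename _ _ _, hmapeq]
    rfl
  have hΘr : ∀ p : R1, Θ (rename Sum.inr p) = C (φk p) := by
    intro p
    rw [show Θ (rename Sum.inr p) = aeval (v ∘ Sum.inr) p from aeval_rename _ _ _]
    have hCA : (v ∘ Sum.inr) = fun i => (IsScalarTower.toAlgHom k L A1) (tL i) := by
      funext i
      show C (tL i) = algebraMap L A1 (tL i)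
      rw [MvPolynomial.algebraMap_eq]
    rw [hCA, ← comp_aeval, AlgHom.comp_apply, haevaltL]
    show algebraMap L A1 _ = _
    rw [MvPolynomial.algebraMap_eq]
  have hspan : (map (algebraMap k L) g - C γ) ^ N ∈
      Ideal.span (Set.range fun j2 : Fin m => map (algebraMap k L) (f j2) - C (β j2)) := by
    have h3 := Ideal.mem_map_of_mem Θ hN
    rw [Ideal.map_span, ← Set.range_comp] at h3
    have himg : (⇑Θ ∘ fun j2 : Fin m =>
          rename (Sum.inl : Fin n → Fin n ⊕ Fin n) (f j2) - rename Sum.inr (f j2))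
        = fun j2 : Fin m => map (algebraMap k L) (f j2) - C (β j2) := by
      funext j2
      show Θ _ = _
      rw [map_sub, hΘl, hΘr]
    have hx : Θ ((rename Sum.inl g - rename Sum.inr g) ^ N)
        = (map (algebraMap k L) g - C γ) ^ N := by
      rw [map_pow, map_sub, hΘl, hΘr]
    rw [himg, hx] at h3
    exact h3
  rw [Ideal.mem_span_range_iff_exists_fun] at hspan
  obtain ⟨c, hc⟩ := hspan
  -- Step 3 : γ lies in the field generated by the β's
  let E := IntermediateField.adjoin k (Set.range β)
  have hγE : γ ∈ E := by
    by_contra hγE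
    have hγnr : γ ∉ (algebraMap ↥E L).range := by
      rintro ⟨y, hy⟩
      exact hγE (hy ▸ y.2)
    let Fint := IntermediateField.adjoin (↥E) {γ}
    let γF : ↥Fint := IntermediateField.AdjoinSimple.gen (↥E) γ
    obtain ⟨σ, hσ⟩ := exists_moving_hom (IsScalarTower.toAlgHom ↥E L Ω) γ hγnr
    let gB : MvPolynomial (Fin n) ↥E := map (algebraMap k ↥E) g
    let βB : Fin m → ↥E := fun j2 => ⟨β j2, IntermediateField.subset_adjoin k _ (Set.mem_range_self j2)⟩
    let vB : Fin m → MvPolynomial (Fin n) ↥E := fun j2 => map (algebraMap k ↥E) (f j2) - C (βB j2)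
    obtain ⟨π, hπ0⟩ := (Algebra.linearMap ↥Fint L).exists_leftInverse_of_injective
      (LinearMap.ker_eq_bot.2 (algebraMap ↥Fint L).injective)
    have hπ : ∀ x : ↥Fint, π (algebraMap ↥Fint L x) = x := fun x => LinearMap.ext_iff.1 hπ0 x
    -- map compatibilities
    have hmapgB : map (algebraMap ↥E L) gB = map (algebraMap k L) g := by
      rw [map_map, ← IsScalarTower.algebraMap_eq k ↥E L]
    have hmapvB : ∀ j2, map (algebraMap ↥E L) (vB j2) = map (algebraMap k L) (f j2) - C (β j2) := by
      intro j2
      rw [map_sub, map_map, ← IsScalarTower.algebraMap_eq k ↥E L, map_C]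
      rfl
    let gF : MvPolynomial (Fin n) ↥Fint := map (algebraMap ↥E ↥Fint) gB
    let vF : Fin m → MvPolynomial (Fin n) ↥Fint := fun j2 => map (algebraMap ↥E ↥Fint) (vB j2)
    have hmapgF : map (algebraMap ↥Fint L) gF = map (algebraMap k L) g := by
      rw [map_map, ← IsScalarTower.algebraMap_eq ↥E ↥Fint L, hmapgB]
    have hmapvF : ∀ j2, map (algebraMap ↥Fint L) (vF j2)
        = map (algebraMap k L) (f j2) - C (β j2) := by
      intro j2
      rw [map_map, ← IsScalarTower.algebraMap_eq ↥E ↥Fint L, hmapvB]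
    have hγFL : algebraMap ↥Fint L γF = γ := IntermediateField.AdjoinSimple.algebraMap_gen ↥E γ
    -- descended identity
    have hkey : (gF - C γF) ^ N = ∑ j2, vF j2 * piPoly π (c j2) := by
      have hLHS : map (algebraMap ↥Fint L) ((gF - C γF) ^ N)
          = (map (algebraMap k L) g - C γ) ^ N := by
        rw [map_pow, map_sub, hmapgF, map_C, hγFL]
      calc (gF - C γF) ^ N
          = piPoly π (map (algebraMap ↥Fint L) ((gF - C γF) ^ N)) := (piPoly_map π hπ _).symm
        _ = piPoly π (∑ j2, c j2 * (map (algebraMap k L) (f j2) - C (β j2))) := by rw [hLHS, hc]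
        _ = ∑ j2, vF j2 * piPoly π (c j2) := by
            rw [piPoly_sum]
            refine Finset.sum_congr rfl fun j2 _ => ?_
            rw [mul_comm (c j2), ← hmapvF j2, piPoly_map_mul]
    -- map by σ and evaluate at the generic point
    let tΩ : Fin n → Ω := fun i => algebraMap L Ω (tL i)
    have hevalmap : ∀ r : MvPolynomial (Fin n) L,
        eval tΩ (map (algebraMap L Ω) r) = algebraMap L Ω (eval tL r) := by
      intro r
      rw [eval_map]
      show _ = algebraMap L Ω (eval₂ (RingHom.id L) tL r)
      rw [eval₂_comp_left (algebraMap L Ω) (RingHom.id L) tL r, RingHom.comp_id]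
      rfl
    have hσmap : ∀ u : MvPolynomial (Fin n) ↥E,
        eval tΩ (map (σ : ↥Fint →+* Ω) (map (algebraMap ↥E ↥Fint) u))
        = algebraMap L Ω (eval tL (map (algebraMap ↥E L) u)) := by
      intro u
      rw [map_map, AlgHom.comp_algebraMap, IsScalarTower.algebraMap_eq ↥E L Ω, ← map_map,
        hevalmap]
    have heval1 : eval tL (map (algebraMap k L) g) = γ := by
      rw [eval_map]
      show eval₂ (algebraMap k L) tL g = γ
      rw [← MvPolynomial.aeval_def, haevaltL]
    have heval2 : ∀ j2, eval tL (map (algebraMap k L) (f j2)) = β j2 := by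
      intro j2
      rw [eval_map]
      show eval₂ (algebraMap k L) tL (f j2) = β j2
      rw [← MvPolynomial.aeval_def, haevaltL]
    have hfinal := congrArg (fun q => eval tΩ (map (σ : ↥Fint →+* Ω) q)) hkey
    simp only [map_pow, map_sub, map_sum, map_mul] at hfinal
    rw [show (eval tΩ) (map (σ : ↥Fint →+* Ω) gF) = algebraMap L Ω γ by
        rw [hσmap, hmapgB, heval1]] at hfinal
    rw [show (eval tΩ) (map (σ : ↥Fint →+* Ω) (C γF)) = σ γF by rw [map_C, eval_C]; rfl] at hfinal
    have hz : ∀ j2 : Fin m, (eval tΩ) (map (σ : ↥Fint →+* Ω) (vF j2)) = 0 := by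
      intro j2
      show (eval tΩ) (map (σ : ↥Fint →+* Ω) (map (algebraMap ↥E ↥Fint) (vB j2))) = 0
      rw [hσmap, hmapvB, map_sub, heval2]
      show algebraMap L Ω (β j2 - eval tL (C (β j2))) = 0
      rw [eval_C, sub_self, map_zero]
    rw [Finset.sum_eq_zero fun j2 _ => by rw [hz j2, zero_mul]] at hfinal
    -- contradiction
    rcases Nat.eq_zero_or_pos N with hN0 | hNpos
    · rw [hN0, pow_zero] at hfinal
      exact one_ne_zero hfinal
    · have h8 : algebraMap L Ω γ - σ γF = 0 := pow_eq_zero_iff hNpos.ne' |>.1 hfinal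
      rw [sub_eq_zero] at h8
      exact hσ h8.symm
  -- Step 4 : produce the polynomial identity over k
  rw [show E = IntermediateField.adjoin k (Set.range β) from rfl,
    IntermediateField.mem_adjoin_range_iff] at hγE
  obtain ⟨r, s, hrs⟩ := hγE
  have hconv : ∀ q : MvPolynomial (Fin m) k, aeval β q = φk (aeval f q) := by
    intro q
    have h9 : (φk.comp (aeval f) : MvPolynomial (Fin m) k →ₐ[k] L) = aeval β :=
      comp_aeval f φk
    rw [← h9]
    rfl
  by_cases hs0 : (aeval β) s = 0
  · rw [hs0, div_zero] at hrs
    have hg0 : g = 0 := by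
      have h10 : algebraMap R1 L g = 0 := hrs
      exact (map_eq_zero_iff _ (IsFractionRing.injective R1 L)).1 h10
    refine ⟨0, fun b => ?_⟩
    obtain ⟨a, ha⟩ := hsurj b
    have hb : (fun i => eval a (f i)) = b := ha
    rw [← hb, hcomp a, hg0, map_zero, map_zero]
  · have hcl : γ * aeval β s = aeval β r := by
      rw [hrs, div_mul_cancel₀ _ hs0]
    have hid1 : g * aeval f s = aeval f r := by
      apply IsFractionRing.injective R1 L
      rw [map_mul]
      have h11 : algebraMap R1 L (aeval f s) = aeval β s := (hconv s).symm
      have h12 : algebraMap R1 L (aeval f r) = aeval β r := (hconv r).symm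
      rw [h11, h12]
      exact hcl
    have hsne : aeval f s ≠ 0 := fun hcon => hs0 (by rw [hconv, hcon, map_zero])
    exact step6 f hsurj h g hcomp s hsne r hid1
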